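/- arXiv:1308.4828 — 2 statements merged into one kernel-verified Lean document; each statement's English description precedes it below -/
import Mathlib

section
/- Let N ≥ 1 be a natural number and let x, y ∈ [0,1]^N be vectors satisfying ∑_{i=1}^N y_i = 1 and ∑_{i=1}^N x_i y_i ≥ 1/2. Then there exists an index i ∈ {1,…,N} such that x_i^2 · y_i ≥ 1/(4N). -/
/-- **Lemma A.1**: if `x, y ∈ [0,1]^N` with `∑ y i = 1` and `∑ x i * y i ≥ 1/2`,
then some index `i` satisfies `x i ^ 2 * y i ≥ 1 / (4 N)`. -/
theorem exists_sq_mul_ge (N : ℕ) (hN : 1 ≤ N) (x y : Fin N → ℝ)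
    (hx : ∀ i, x i ∈ Set.Icc (0 : ℝ) 1) (hy : ∀ i, y i ∈ Set.Icc (0 : ℝ) 1)
    (hsum : ∑ i, y i = 1) (hxy : 1 / 2 ≤ ∑ i, x i * y i) :
    ∃ i, 1 / (4 * N) ≤ x i ^ 2 * y i := by
  have hCS : (∑ i, x i * y i) ^ 2 ≤ (∑ i, x i ^ 2 * y i) * ∑ i, y i :=
    Finset.sum_sq_le_sum_mul_sum_of_sq_eq_mul Finset.univ
      (fun i _ => mul_nonneg (sq_nonneg _) (hy i).1) (fun i _ => (hy i).1)
      (fun i _ => by ring)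
  rw [hsum, mul_one] at hCS
  have h4 : (1 : ℝ) / 4 ≤ ∑ i, x i ^ 2 * y i := by
    calc (1 : ℝ) / 4 = (1 / 2) ^ 2 := by norm_num
    _ ≤ (∑ i, x i * y i) ^ 2 := by
        apply pow_le_pow_left₀ (by norm_num) hxy
    _ ≤ _ := hCS
  by_contra h
  push_neg at h
  have : (∑ i, x i ^ 2 * y i) < ∑ _i : Fin N, 1 / (4 * (N : ℝ)) := by
    apply Finset.sum_lt_sum_of_nonempty
    · exact Finset.univ_nonempty_iff.mpr (Fin.pos_iff_nonempty.mp hN)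
    · exact fun i _ => h i
  rw [Finset.sum_const, Finset.card_univ, Fintype.card_fin, nsmul_eq_mul] at this
  have hNpos : (0 : ℝ) < N := by exact_mod_cast hN
  have heq : (N:ℝ) * (1 / (4 * N)) = 1/4 := by field_simp
  linarith
end

section
/- Let a, b > 2 be real numbers and define x := 4a·(log(ab))^2, where log denotes the natural logarithm. Then x ≥ a·log(bx). -/
/-- **Lemma A.2**: for `a, b > 2` and `x := 4 a (log (a b))²`, we have `x ≥ a log (b x)`. -/
theorem lem_w (a b x : ℝ) (ha : 2 < a) (hb : 2 < b)
    (hx : x = 4 * a * (Real.log (a * b)) ^ 2) :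
    a * Real.log (b * x) ≤ x := by
  have hab4 : (4:ℝ) < a * b := by nlinarith
  have habpos : (0:ℝ) < a * b := by linarith
  set L := Real.log (a * b) with hLdef
  have hL1 : 1 < L := by
    rw [hLdef, Real.lt_log_iff_exp_lt habpos]
    have := Real.exp_one_lt_d9
    linarith
  have hL4 : Real.log 4 ≤ L := by
    rw [hLdef]
    exact Real.log_le_log (by norm_num) hab4.le
  have hLpos : (0:ℝ) < L := by linarith
  have hbx : b * x = 4 * (a * b) * L ^ 2 := by rw [hx]; ring
  have hlog : Real.log (b * x) = Real.log 4 + L + 2 * Real.log L := by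
    rw [hbx, Real.log_mul (by positivity) (by positivity),
      Real.log_mul (by norm_num) (by positivity), Real.log_pow]
    push_cast
    ring
  have hlogL : Real.log L ≤ L - 1 := Real.log_le_sub_one_of_pos hLpos
  have key : Real.log (b * x) ≤ 4 * L ^ 2 := by nlinarith
  calc a * Real.log (b * x) ≤ a * (4 * L ^ 2) :=
        mul_le_mul_of_nonneg_left key (by linarith)
    _ = x := by rw [hx]; ring
end
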